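/- Define c(x) = 2·arsinh(sin(π·x/2)) and, for a positive integer r, C_r = ∑_{j=1}^{r-1} c(j/r) (interpreted as 0 when r = 1). Then for all positive integers r ≤ s, one has r·C_s − s·C_r ≥ 0, i.e., C_s/s ≥ C_r/r. -/

import Mathlib

open Real Finset

/-- `cFun x = 2 · arsinh (sin (π x / 2))`. -/
noncomputable def cFun (x : ℝ) : ℝ := 2 * Real.arsinh (Real.sin (π * x / 2))

/-- `C r = ∑_{j=1}^{r-1} c(j/r)` (interpreted as `0` when `r = 1`). -/
noncomputable def Csum (r : ℕ) : ℝ := ∑ j ∈ Finset.Icc 1 (r - 1), cFun ((j : ℝ) / r)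

noncomputable def gFun (x : ℝ) : ℝ :=
  π * Real.cos (π * x / 2) / Real.sqrt (1 + Real.sin (π * x / 2) ^ 2)

lemma sqrt_pos' (t : ℝ) : 0 < Real.sqrt (1 + t ^ 2) := by
  apply Real.sqrt_pos.2; positivity

lemma hasDerivAt_cFun (x : ℝ) : HasDerivAt cFun (gFun x) x := by
  have h1 : HasDerivAt (fun x : ℝ => π * x / 2) (π / 2) x := by
    simpa using ((hasDerivAt_id x).const_mul π).div_const 2
  have h2 : HasDerivAt (fun x : ℝ => Real.sin (π * x / 2))
      (Real.cos (π * x / 2) * (π / 2)) x := (Real.hasDerivAt_sin _).comp x h1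
  have h3 := (Real.hasDerivAt_arsinh (Real.sin (π * x / 2))).comp x h2
  have h4 := h3.const_mul 2
  refine HasDerivAt.congr_deriv h4 ?_
  have hs := (sqrt_pos' (Real.sin (π * x / 2))).ne'
  unfold gFun
  field_simp

lemma gFun_nonneg {x : ℝ} (hx : x ∈ Set.Icc (0:ℝ) 1) : 0 ≤ gFun x := by
  obtain ⟨h0, h1⟩ := hx
  have hcos : 0 ≤ Real.cos (π * x / 2) := by
    apply Real.cos_nonneg_of_mem_Icc
    constructor <;> nlinarith [Real.pi_pos]
  have := (sqrt_pos' (Real.sin (π * x / 2)))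
  unfold gFun
  positivity

lemma gFun_antitone {x y : ℝ} (hx : x ∈ Set.Icc (0:ℝ) 1) (hy : y ∈ Set.Icc (0:ℝ) 1)
    (hxy : x ≤ y) : gFun y ≤ gFun x := by
  obtain ⟨hx0, hx1⟩ := hx
  obtain ⟨hy0, hy1⟩ := hy
  have hpi := Real.pi_pos
  have hcosy : 0 ≤ Real.cos (π * y / 2) := by
    apply Real.cos_nonneg_of_mem_Icc; constructor <;> nlinarith
  have hcos : Real.cos (π * y / 2) ≤ Real.cos (π * x / 2) := by
    apply Real.cos_le_cos_of_nonneg_of_le_pi (by nlinarith) (by nlinarith) (by nlinarith)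
  have hsin0 : 0 ≤ Real.sin (π * x / 2) := by
    apply Real.sin_nonneg_of_nonneg_of_le_pi (by nlinarith) (by nlinarith)
  have hsin : Real.sin (π * x / 2) ≤ Real.sin (π * y / 2) := by
    apply Real.sin_le_sin_of_le_of_le_pi_div_two (by nlinarith) (by nlinarith) (by nlinarith)
  have hsq : Real.sqrt (1 + Real.sin (π * x / 2) ^ 2) ≤
      Real.sqrt (1 + Real.sin (π * y / 2) ^ 2) := by
    apply Real.sqrt_le_sqrt; nlinarith
  have h1 := sqrt_pos' (Real.sin (π * x / 2))
  have h2 := sqrt_pos' (Real.sin (π * y / 2))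
  unfold gFun
  have hnum : π * Real.cos (π * y / 2) ≤ π * Real.cos (π * x / 2) := by nlinarith
  calc π * Real.cos (π * y / 2) / Real.sqrt (1 + Real.sin (π * y / 2) ^ 2)
      ≤ π * Real.cos (π * y / 2) / Real.sqrt (1 + Real.sin (π * x / 2) ^ 2) := by
        gcongr
    _ ≤ π * Real.cos (π * x / 2) / Real.sqrt (1 + Real.sin (π * x / 2) ^ 2) := by
        gcongr

lemma tangent_le {x y : ℝ} (hx : x ∈ Set.Icc (0:ℝ) 1) (hy : y ∈ Set.Icc (0:ℝ) 1) :
    cFun y ≤ cFun x + gFun x * (y - x) := by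
  have hcont : ∀ a b : ℝ, ContinuousOn cFun (Set.Icc a b) :=
    fun a b => (fun t _ => (hasDerivAt_cFun t).differentiableAt.continuousAt.continuousWithinAt)
  rcases lt_trichotomy x y with h | h | h
  · obtain ⟨c, hc, hceq⟩ := exists_hasDerivAt_eq_slope cFun gFun h (hcont x y)
      (fun t _ => hasDerivAt_cFun t)
    have hgc : gFun c ≤ gFun x :=
      gFun_antitone hx ⟨le_trans hx.1 hc.1.le, le_trans hc.2.le hy.2⟩ hc.1.le
    have hne : y - x ≠ 0 := by linarith
    have : cFun y - cFun x = gFun c * (y - x) := by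
      have h2 := (div_eq_iff hne).1 hceq.symm
      linarith
    nlinarith [this, hgc, sub_pos.2 h]
  · rw [h]; simp
  · obtain ⟨c, hc, hceq⟩ := exists_hasDerivAt_eq_slope cFun gFun h (hcont y x)
      (fun t _ => hasDerivAt_cFun t)
    have hgc : gFun x ≤ gFun c :=
      gFun_antitone ⟨le_trans hy.1 hc.1.le, le_trans hc.2.le hx.2⟩ hx hc.2.le
    have hne : x - y ≠ 0 := by linarith
    have : cFun x - cFun y = gFun c * (x - y) := by
      have h2 := (div_eq_iff hne).1 hceq.symm
      linarith
    nlinarith [this, hgc, sub_pos.2 h]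

lemma abel_nonneg : ∀ (N : ℕ) (d z : ℕ → ℝ), (∀ i j, i ≤ j → d j ≤ d i) →
    (∀ i, 0 ≤ d i) → (∀ k, k ≤ N → 0 ≤ ∑ i ∈ range k, z i) →
    0 ≤ ∑ i ∈ range N, d i * z i := by
  intro N
  induction N with
  | zero => intro d z _ _ _; simp
  | succ N ih =>
    intro d z hd hd0 hP
    set d' : ℕ → ℝ := fun i => d (min i N) - d N with hd'
    have key : ∑ i ∈ range (N + 1), d i * z i
        = ∑ i ∈ range N, d' i * z i + d N * ∑ i ∈ range (N + 1), z i := by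
      have e1 : ∑ i ∈ range N, d' i * z i = ∑ i ∈ range N, (d i * z i - d N * z i) := by
        apply Finset.sum_congr rfl
        intro i hi
        have hmin : min i N = i := min_eq_left (le_of_lt (Finset.mem_range.1 hi))
        simp only [hd', hmin]
        ring
      rw [e1, Finset.sum_sub_distrib, Finset.mul_sum,
        Finset.sum_range_succ (fun i => d i * z i), Finset.sum_range_succ (fun i => d N * z i)]
      ring
    rw [key]
    have h1 : 0 ≤ ∑ i ∈ range N, d' i * z i := by
      apply ih d' z
      · intro i j hij
        simp only [hd']
        have : min i N ≤ min j N := by omega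
        have := hd _ _ (min_le_min_right N hij)
        linarith [hd _ _ (min_le_min_right N hij)]
      · intro i
        simp only [hd']
        have := hd (min i N) N (min_le_right i N)
        linarith
      · intro k hk; exact hP k (le_trans hk (Nat.le_succ N))
    have h2 : 0 ≤ d N * ∑ i ∈ range (N + 1), z i :=
      mul_nonneg (hd0 N) (hP (N + 1) le_rfl)
    linarith

lemma sum_range_mul_div (a b : ℕ) (f : ℕ → ℝ) (hb : 0 < b) :
    ∑ i ∈ range (a * b), f (i / b) = b • ∑ j ∈ range a, f j := by
  induction a with
  | zero => simp
  | succ a ih =>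
    have h1 : (a + 1) * b = a * b + b := by ring
    rw [h1, Finset.sum_range_add, ih, Finset.sum_range_succ]
    have h2 : ∀ i ∈ range b, f ((a * b + i) / b) = f a := by
      intro i hi
      have hi' := Finset.mem_range.1 hi
      congr 1
      have h3 : a * b + i = i + b * a := by ring
      rw [h3, Nat.add_mul_div_left _ _ hb, Nat.div_eq_of_lt hi']
      omega
    rw [Finset.sum_congr rfl h2, Finset.sum_const, Finset.card_range, smul_add]

lemma mod_sum_closed (m : ℕ) (hm : 0 < m) (k : ℕ) :
    2 * (∑ i ∈ range k, ((i % m : ℕ) : ℤ)) + ((k % m : ℕ) : ℤ) * ((m : ℤ) - ((k % m : ℕ) : ℤ))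
      = (k : ℤ) * ((m : ℤ) - 1) := by
  induction k with
  | zero => simp
  | succ k ih =>
    rw [Finset.sum_range_succ]
    have ht : k % m < m := Nat.mod_lt _ hm
    have hdm : k + 1 = m * (k / m) + (k % m + 1) := by
      have := Nat.div_add_mod k m; omega
    rcases eq_or_lt_of_le (Nat.succ_le_of_lt ht) with h | h
    · have h1 : (k + 1) % m = 0 := by
        rw [hdm, show k % m + 1 = m from h, ← Nat.mul_succ, Nat.mul_mod_right]
      rw [h1]
      have h' : ((k % m : ℕ) : ℤ) = (m : ℤ) - 1 := by
        have : k % m + 1 = m := h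
        omega
      push_cast
      push_cast [h'] at ih
      linarith
    · have h1 : (k + 1) % m = k % m + 1 := by
        rw [hdm, Nat.mul_add_mod, Nat.mod_eq_of_lt h]
      rw [h1]
      push_cast
      push_cast at ih
      nlinarith [ih]

lemma core_ineq (r s k : ℕ) (hr : 0 < r) (hrs : r ≤ s) :
    ((( k + r) % s : ℕ) : ℤ) * ((s : ℤ) - (((k + r) % s : ℕ) : ℤ))
      ≤ ((s : ℤ) - r) * ((k : ℤ) + r) + (((k + r) % r : ℕ) : ℤ) * ((r : ℤ) - (((k + r) % r : ℕ) : ℤ)) := by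
  have hs : 0 < s := lt_of_lt_of_le hr hrs
  set K := k + r with hK
  have hdu := Nat.div_add_mod K s
  have hdt := Nat.div_add_mod K r
  have hu : K % s < s := Nat.mod_lt _ hs
  have ht : K % r < r := Nat.mod_lt _ hr
  have hML : K / s ≤ K / r := Nat.div_le_div_left hrs hr
  set u : ℤ := ((K % s : ℕ) : ℤ) with hu'
  set t : ℤ := ((K % r : ℕ) : ℤ) with ht'
  set M : ℤ := ((K / s : ℕ) : ℤ) with hM'
  set L : ℤ := ((K / r : ℕ) : ℤ) with hL'
  have hu0 : 0 ≤ u := Int.natCast_nonneg _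
  have ht0 : 0 ≤ t := Int.natCast_nonneg _
  have hus : u < (s : ℤ) := by rw [hu']; exact_mod_cast hu
  have htr : t < (r : ℤ) := by rw [ht']; exact_mod_cast ht
  have hM0 : 0 ≤ M := Int.natCast_nonneg _
  have hML' : M ≤ L := by rw [hM', hL']; exact_mod_cast hML
  have hKu : (s : ℤ) * M + u = (K : ℤ) := by rw [hM', hu']; exact_mod_cast hdu
  have hKt : (r : ℤ) * L + t = (K : ℤ) := by rw [hL', ht']; exact_mod_cast hdt
  have hrs' : (r : ℤ) ≤ (s : ℤ) := by exact_mod_cast hrs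
  have hr0 : (0 : ℤ) < r := by exact_mod_cast hr
  set c : ℤ := M * ((s : ℤ) - r) with hc'
  set e : ℤ := L - M with he'
  have hc0 : 0 ≤ c := mul_nonneg hM0 (by linarith)
  have he0 : 0 ≤ e := by rw [he']; linarith
  have hrel : c + u = e * (r : ℤ) + t := by
    rw [hc', he']; linear_combination hKu - hKt
  have hKk : (K : ℤ) = (k : ℤ) + r := by rw [hK]; push_cast; ring
  have hred : ((s : ℤ) - r) * ((k : ℤ) + r) = c * s + ((s : ℤ) - r) * u := by
    rw [hc', ← hKk, ← hKu]; ring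
  have hsplit : u * ((s : ℤ) - u) = u * ((r : ℤ) - u) + ((s : ℤ) - r) * u := by ring
  have hgoal : u * ((r : ℤ) - u) ≤ c * s + t * ((r : ℤ) - t) := by
    rcases le_or_gt (r : ℤ) u with hur | hur
    · have h1 : u * ((r : ℤ) - u) ≤ 0 := mul_nonpos_of_nonneg_of_nonpos hu0 (by linarith)
      have h2 : 0 ≤ c * s := mul_nonneg hc0 (by positivity)
      have h3 : 0 ≤ t * ((r : ℤ) - t) := mul_nonneg ht0 (by linarith)
      linarith
    · rcases lt_trichotomy e 1 with he1 | he1 | he1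
      · have he00 : e = 0 := le_antisymm (by linarith) he0
        have hceq : c = t - u := by rw [he00] at hrel; linarith
        have key : c * s + t * ((r : ℤ) - t) - u * ((r : ℤ) - u)
            = c * ((s : ℤ) + (r : ℤ) - u - t) := by rw [hceq]; ring
        have h1 : 0 ≤ c * ((s : ℤ) + (r : ℤ) - u - t) := mul_nonneg hc0 (by linarith)
        linarith
      · have hceq : c = (r : ℤ) + t - u := by rw [he1] at hrel; linarith
        have key : c * s + t * ((r : ℤ) - t) - u * ((r : ℤ) - u)
            = c * ((s : ℤ) - r) + ((r : ℤ) - u) ^ 2 + t * (2 * (r : ℤ) - t) := by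
          rw [hceq]; ring
        have h1 : 0 ≤ c * ((s : ℤ) - r) := mul_nonneg hc0 (by linarith)
        have h2 : 0 ≤ ((r : ℤ) - u) ^ 2 := sq_nonneg _
        have h3 : 0 ≤ t * (2 * (r : ℤ) - t) := mul_nonneg ht0 (by linarith)
        linarith
      · have he2 : (2 : ℤ) ≤ e := by linarith
        have hee : 2 * (r : ℤ) ≤ e * r := mul_le_mul_of_nonneg_right he2 (le_of_lt hr0)
        have hcr : (r : ℤ) ≤ c := by linarith
        have h1 : u * ((r : ℤ) - u) ≤ (r : ℤ) * r := by
          have ha := mul_le_mul_of_nonneg_right (le_of_lt hur) (by linarith : (0:ℤ) ≤ (r : ℤ) - u)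
          have hb := mul_le_mul_of_nonneg_left (by linarith : (r : ℤ) - u ≤ (r : ℤ)) (le_of_lt hr0)
          linarith
        have h2 : (r : ℤ) * r ≤ c * s := by
          have ha : (r : ℤ) * s ≤ c * s := mul_le_mul_of_nonneg_right hcr (by positivity)
          have hb := mul_le_mul_of_nonneg_left hrs' (le_of_lt hr0)
          linarith
        have h3 : 0 ≤ t * ((r : ℤ) - t) := mul_nonneg ht0 (by linarith)
        linarith
  linarith

lemma mod_sum_le (r s : ℕ) (hr : 0 < r) (hrs : r ≤ s) (k : ℕ) :
    (∑ i ∈ range k, ((i % r : ℕ) : ℤ)) ≤ ∑ i ∈ range k, (((i + r) % s : ℕ) : ℤ) := by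
  have hs : 0 < s := lt_of_lt_of_le hr hrs
  have h1 := mod_sum_closed s hs (k + r)
  have h2 := mod_sum_closed r hr k
  have hsplit : ∑ i ∈ range (k + r), ((i % s : ℕ) : ℤ)
      = ∑ i ∈ range r, ((i % s : ℕ) : ℤ) + ∑ i ∈ range k, (((i + r) % s : ℕ) : ℤ) := by
    rw [Nat.add_comm k r, Finset.sum_range_add]
    congr 1
    apply Finset.sum_congr rfl
    intro i _
    rw [Nat.add_comm r i]
  have hsmall : ∑ i ∈ range r, ((i % s : ℕ) : ℤ) = ∑ i ∈ range r, (i : ℤ) := by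
    apply Finset.sum_congr rfl
    intro i hi
    rw [Nat.mod_eq_of_lt (lt_of_lt_of_le (Finset.mem_range.1 hi) hrs)]
  have hg : 2 * ∑ i ∈ range r, (i : ℤ) = (r : ℤ) * ((r : ℤ) - 1) := by
    have := Finset.sum_range_id_mul_two r
    have h' : ((∑ i ∈ range r, i) * 2 : ℕ) = (r * (r - 1) : ℕ) := by rw [this]
    have h'' : (((∑ i ∈ range r, i) * 2 : ℕ) : ℤ) = ((r * (r - 1) : ℕ) : ℤ) := by
      exact_mod_cast h'
    push_cast [Nat.cast_sub hr] at h''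
    linarith
  have hcore := core_ineq r s k hr hrs
  rw [Nat.add_mod_right k r] at hcore
  have hmod : (k + r) % s = k % s ∨ True := Or.inr trivial
  -- combine
  have hu := h1
  rw [hsplit, hsmall] at hu
  -- hu : 2*(gauss-sum + shifted-sum) + u*(s-u) = (k+r)*(s-1)
  push_cast at hu h2 hcore ⊢
  nlinarith [hu, h2, hcore, hg]

lemma partial_nonneg (r s : ℕ) (hr : 0 < r) (hrs : r ≤ s) (k : ℕ) :
    0 ≤ ∑ i ∈ range k, (((i / r + 1 : ℕ) : ℝ) / s - (((i + r) / s : ℕ) : ℝ) / r) := by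
  have hs : 0 < s := lt_of_lt_of_le hr hrs
  have hZ : (s : ℤ) * ∑ i ∈ range k, (((i + r) / s : ℕ) : ℤ)
      ≤ (r : ℤ) * ∑ i ∈ range k, ((i / r + 1 : ℕ) : ℤ) := by
    rw [Finset.mul_sum, Finset.mul_sum]
    have e1 : ∀ i ∈ range k, (r : ℤ) * ((i / r + 1 : ℕ) : ℤ)
        = ((i : ℤ) - ((i % r : ℕ) : ℤ)) + r := by
      intro i _
      push_cast
      have h := Int.mul_ediv_add_emod (i : ℤ) (r : ℤ)
      linarith
    have e2 : ∀ i ∈ range k, (s : ℤ) * (((i + r) / s : ℕ) : ℤ)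
        = ((i : ℤ) + r) - (((i + r) % s : ℕ) : ℤ) := by
      intro i _
      push_cast
      have h := Int.mul_ediv_add_emod ((i : ℤ) + (r : ℤ)) (s : ℤ)
      linarith
    rw [Finset.sum_congr rfl e1, Finset.sum_congr rfl e2]
    simp only [Finset.sum_sub_distrib, Finset.sum_add_distrib, Finset.sum_const,
      Finset.card_range, nsmul_eq_mul]
    linarith [mod_sum_le r s hr hrs k]
  rw [Finset.sum_sub_distrib, ← Finset.sum_div, ← Finset.sum_div]
  rw [sub_nonneg]
  have hr' : (0 : ℝ) < r := by exact_mod_cast hr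
  have hs' : (0 : ℝ) < s := by exact_mod_cast hs
  rw [div_le_div_iff₀ hr' hs']
  have hN : s * ∑ i ∈ range k, ((i + r) / s) ≤ r * ∑ i ∈ range k, (i / r + 1) := by
    exact_mod_cast hZ
  have hN' : (∑ i ∈ range k, ((i + r) / s)) * s ≤ (∑ i ∈ range k, (i / r + 1)) * r := by
    rw [Nat.mul_comm (∑ i ∈ range k, ((i + r) / s)) s,
      Nat.mul_comm (∑ i ∈ range k, (i / r + 1)) r]
    exact hN
  exact_mod_cast hN'

lemma csumAux_eq_range (m q : ℕ) (hm : 0 < m) :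
    ∑ j ∈ Finset.Icc 1 (m - 1), cFun ((j : ℝ) / q) =
      ∑ j ∈ range (m - 1), cFun (((j + 1 : ℕ) : ℝ) / q) := by
  have h1 : Finset.Icc 1 (m - 1) = Finset.Ico 1 m := by
    rw [← Finset.Ico_add_one_right_eq_Icc]
    congr 1
    omega
  rw [h1, Finset.sum_Ico_eq_sum_range]
  have h2 : m - 1 = m - 1 := rfl
  apply Finset.sum_congr rfl
  intro i _
  congr 2
  push_cast
  ring

lemma stepA (r s : ℕ) (hr : 0 < r) (hs : 0 < s) :
    (r : ℝ) * (∑ j ∈ Finset.Icc 1 (s - 1), cFun ((j : ℝ) / s)) =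
      ∑ i ∈ range ((s - 1) * r), cFun (((i / r + 1 : ℕ) : ℝ) / s) := by
  have key := sum_range_mul_div (s - 1) r (fun j => cFun (((j + 1 : ℕ) : ℝ) / s)) hr
  rw [csumAux_eq_range s s hs]
  simp only [nsmul_eq_mul] at key
  exact key.symm

lemma stepB (r s : ℕ) (hr : 0 < r) (hs : 0 < s) (hrs : r ≤ s) :
    (s : ℝ) * (∑ j ∈ Finset.Icc 1 (r - 1), cFun ((j : ℝ) / r)) =
      ∑ i ∈ range ((s - 1) * r), cFun ((((i + r) / s : ℕ) : ℝ) / r) := by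
  have hN : r + (s - 1) * r = r * s := by
    have : 1 ≤ s := hs
    calc r + (s - 1) * r = (1 + (s - 1)) * r := by ring
    _ = s * r := by congr 1; omega
    _ = r * s := Nat.mul_comm s r
  have key := sum_range_mul_div r s (fun v => cFun (((v : ℕ) : ℝ) / r)) hs
  have split : ∑ i ∈ range (r * s), cFun (((i / s : ℕ) : ℝ) / r)
      = ∑ i ∈ range r, cFun (((i / s : ℕ) : ℝ) / r)
        + ∑ i ∈ range ((s - 1) * r), cFun ((((r + i) / s : ℕ) : ℝ) / r) := by
    rw [← hN, Finset.sum_range_add]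
  have hzero : ∑ i ∈ range r, cFun (((i / s : ℕ) : ℝ) / r) = 0 := by
    apply Finset.sum_eq_zero
    intro i hi
    have : i / s = 0 := Nat.div_eq_of_lt (lt_of_lt_of_le (Finset.mem_range.1 hi) hrs)
    rw [this]
    simp [cFun]
  have hfirst : ∑ v ∈ range r, cFun (((v : ℕ) : ℝ) / r)
      = ∑ j ∈ Finset.Icc 1 (r - 1), cFun ((j : ℝ) / r) := by
    have hr1 : r = (r - 1) + 1 := by omega
    have e0 : cFun (((0 : ℕ) : ℝ) / (r : ℝ)) = 0 := by simp [cFun]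
    calc ∑ v ∈ range r, cFun (((v : ℕ) : ℝ) / r)
        = ∑ v ∈ range ((r - 1) + 1), cFun (((v : ℕ) : ℝ) / r) := by rw [← hr1]
      _ = ∑ k ∈ range (r - 1), cFun ((((k + 1 : ℕ)) : ℝ) / r) + cFun (((0 : ℕ) : ℝ) / r) :=
          Finset.sum_range_succ' _ _
      _ = ∑ k ∈ range (r - 1), cFun ((((k + 1 : ℕ)) : ℝ) / r) := by rw [e0, add_zero]
      _ = ∑ j ∈ Finset.Icc 1 (r - 1), cFun ((j : ℝ) / r) := (csumAux_eq_range r r hr).symm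
  calc (s : ℝ) * (∑ j ∈ Finset.Icc 1 (r - 1), cFun ((j : ℝ) / r))
      = (s : ℝ) * ∑ v ∈ range r, cFun (((v : ℕ) : ℝ) / r) := by rw [hfirst]
    _ = ∑ i ∈ range (r * s), cFun (((i / s : ℕ) : ℝ) / r) := by
        rw [key]; simp [nsmul_eq_mul]
    _ = ∑ i ∈ range ((s - 1) * r), cFun ((((r + i) / s : ℕ) : ℝ) / r) := by
        rw [split, hzero, zero_add]
    _ = ∑ i ∈ range ((s - 1) * r), cFun ((((i + r) / s : ℕ) : ℝ) / r) := by
        apply Finset.sum_congr rfl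
        intro i _
        rw [Nat.add_comm r i]

theorem Csum_ratio_monotone (r s : ℕ) (hr : 0 < r) (hs : 0 < s) (hrs : r ≤ s) :
    0 ≤ (r : ℝ) * Csum s - (s : ℝ) * Csum r := by
  have hr' : (0 : ℝ) < r := by exact_mod_cast hr
  have hs' : (0 : ℝ) < s := by exact_mod_cast hs
  set N := (s - 1) * r with hN
  set x : ℕ → ℝ := fun i => ((i / r + 1 : ℕ) : ℝ) / s with hxdef
  set y : ℕ → ℝ := fun i => (((i + r) / s : ℕ) : ℝ) / r with hydef
  have hx_mem : ∀ i ∈ range N, x i ∈ Set.Icc (0 : ℝ) 1 := by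
    intro i hi
    have hii : i < (s - 1) * r := Finset.mem_range.1 hi
    have h1 : i / r < s - 1 := (Nat.div_lt_iff_lt_mul hr).2 hii
    have h2 : i / r + 1 ≤ s := by omega
    constructor
    · positivity
    · rw [div_le_one hs']; exact_mod_cast h2
  have hy_mem : ∀ i ∈ range N, y i ∈ Set.Icc (0 : ℝ) 1 := by
    intro i hi
    have hii : i < (s - 1) * r := Finset.mem_range.1 hi
    have hsr : (s - 1) * r + r = r * s := by
      cases s with
      | zero => omega
      | succ n => simp [Nat.succ_sub_one]; ring
    have h1 : i + r < r * s := by omega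
    have h2 : (i + r) / s < r := (Nat.div_lt_iff_lt_mul hs).2 (by omega)
    constructor
    · positivity
    · rw [div_le_one hr']; exact_mod_cast h2.le
  set d : ℕ → ℝ := fun i => gFun (min (x i) 1) with hddef
  set z : ℕ → ℝ := fun i => x i - y i with hzdef
  have hxmono : ∀ i j : ℕ, i ≤ j → x i ≤ x j := by
    intro i j hij
    have h1 : i / r + 1 ≤ j / r + 1 := by
      have := Nat.div_le_div_right (c := r) hij; omega
    have h2 : ((i / r + 1 : ℕ) : ℝ) ≤ ((j / r + 1 : ℕ) : ℝ) := by exact_mod_cast h1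
    simp only [hxdef]
    exact div_le_div_of_nonneg_right h2 hs'.le
  have hxnn : ∀ i : ℕ, 0 ≤ x i := by intro i; simp only [hxdef]; positivity
  have hmin_mem : ∀ i : ℕ, min (x i) 1 ∈ Set.Icc (0 : ℝ) 1 :=
    fun i => ⟨le_min (hxnn i) zero_le_one, min_le_right _ _⟩
  have hd_anti : ∀ i j : ℕ, i ≤ j → d j ≤ d i := by
    intro i j hij
    exact gFun_antitone (hmin_mem i) (hmin_mem j) (min_le_min (hxmono i j hij) le_rfl)
  have hd_nn : ∀ i : ℕ, 0 ≤ d i := fun i => gFun_nonneg (hmin_mem i)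
  have hP : ∀ k : ℕ, k ≤ N → 0 ≤ ∑ i ∈ range k, z i := by
    intro k _
    exact partial_nonneg r s hr hrs k
  have habel : 0 ≤ ∑ i ∈ range N, d i * z i := abel_nonneg N d z hd_anti hd_nn hP
  have hsum : ∑ i ∈ range N, d i * z i = ∑ i ∈ range N, gFun (x i) * (x i - y i) := by
    apply Finset.sum_congr rfl
    intro i hi
    have : min (x i) 1 = x i := min_eq_left (hx_mem i hi).2
    simp only [hddef, hzdef, this]
  have htan : ∀ i ∈ range N, gFun (x i) * (x i - y i) ≤ cFun (x i) - cFun (y i) := by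
    intro i hi
    have h := tangent_le (hx_mem i hi) (hy_mem i hi)
    nlinarith [h]
  have hfin : 0 ≤ ∑ i ∈ range N, (cFun (x i) - cFun (y i)) := by
    calc (0 : ℝ) ≤ ∑ i ∈ range N, d i * z i := habel
      _ = ∑ i ∈ range N, gFun (x i) * (x i - y i) := hsum
      _ ≤ ∑ i ∈ range N, (cFun (x i) - cFun (y i)) := Finset.sum_le_sum htan
  have hA := stepA r s hr hs
  have hB := stepB r s hr hs hrs
  unfold Csum
  rw [hA, hB, ← Finset.sum_sub_distrib]
  exact hfin
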